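/- The function f_∞ : [0,1] → [0,1] defined by f_∞(z) = √(1 - (2/√3)√z) for z ∈ [0,1/3] and f_∞(z) = (√3/2)(1-z) for z ∈ [1/3,1] satisfies the symmetry: for all a ∈ [0,1], if b = f_∞(a)² then a = f_∞(b)². -/

import Mathlib

open Real

theorem stmt_6 (f : ℝ → ℝ)
    (hf : ∀ z, f z = if z ≤ 1 / 3 then Real.sqrt (1 - (2 / Real.sqrt 3) * Real.sqrt z)
                     else (Real.sqrt 3 / 2) * (1 - z)) :
    ∀ a ∈ Set.Icc (0:ℝ) 1, ∀ b, b = (f a) ^ 2 → a = (f b) ^ 2 := by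
  intro a ha b hb
  obtain ⟨ha0, ha1⟩ := ha
  have h3 : (0:ℝ) < Real.sqrt 3 := Real.sqrt_pos.mpr (by norm_num)
  have h3sq : Real.sqrt 3 * Real.sqrt 3 = 3 := Real.mul_self_sqrt (by norm_num)
  have hs13 : Real.sqrt (1/3) = 1 / Real.sqrt 3 := by
    rw [show (1:ℝ)/3 = 1 / (Real.sqrt 3 * Real.sqrt 3) by rw [h3sq]]
    rw [← sq, Real.sqrt_div' 1 (by norm_num), Real.sqrt_sq h3.le]
    simp
  have h2 : (2 / Real.sqrt 3) * (1 / Real.sqrt 3) = 2 / 3 := by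
    field_simp
    rw [sq, h3sq]
  by_cases h : a ≤ 1 / 3
  · -- first branch for a
    have hsa0 : 0 ≤ Real.sqrt a := Real.sqrt_nonneg a
    have hsa : Real.sqrt a ≤ 1 / Real.sqrt 3 := by
      have := Real.sqrt_le_sqrt h
      rw [hs13] at this
      exact this
    have hkey : (2 / Real.sqrt 3) * Real.sqrt a ≤ 2 / 3 := by
      calc (2 / Real.sqrt 3) * Real.sqrt a ≤ (2 / Real.sqrt 3) * (1 / Real.sqrt 3) :=
            mul_le_mul_of_nonneg_left hsa (by positivity)
        _ = 2 / 3 := h2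
    have harg : 0 ≤ 1 - (2 / Real.sqrt 3) * Real.sqrt a := by linarith
    have hb' : b = 1 - (2 / Real.sqrt 3) * Real.sqrt a := by
      rw [hb, hf, if_pos h, sq, Real.mul_self_sqrt harg]
    have hbge : 1 / 3 ≤ b := by rw [hb']; linarith
    by_cases hb13 : b ≤ 1 / 3
    · -- b = 1/3 forces a = 1/3
      have hbeq : b = 1 / 3 := le_antisymm hb13 hbge
      have h' : (2 / Real.sqrt 3) * Real.sqrt a = 2 / 3 := by
        rw [hbeq] at hb'; linarith
      have hsaeq : Real.sqrt a = Real.sqrt 3 / 3 := by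
        field_simp at h'
        linarith
      have haeq : a = 1 / 3 := by
        have hmul : Real.sqrt a * Real.sqrt a = a := Real.mul_self_sqrt ha0
        rw [hsaeq] at hmul
        nlinarith [h3sq]
      have hsb13 : (2 / Real.sqrt 3) * Real.sqrt b = 2 / 3 := by
        rw [hbeq, hs13, h2]
      rw [hf, if_pos hb13, sq, Real.mul_self_sqrt (by rw [hsb13]; norm_num),
        hsb13, haeq]
      norm_num
    · -- second branch for b
      rw [hf, if_neg hb13, hb']
      have key : Real.sqrt 3 / 2 * (1 - (1 - 2 / Real.sqrt 3 * Real.sqrt a)) = Real.sqrt a := by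
        field_simp
        ring
      rw [key, sq, Real.mul_self_sqrt ha0]
  · -- second branch for a
    push_neg at h
    have h1a : 0 ≤ 1 - a := by linarith
    have hb' : b = (Real.sqrt 3 / 2 * (1 - a)) ^ 2 := by
      rw [hb, hf, if_neg (by linarith)]
    have hble : b ≤ 1 / 3 := by
      rw [hb']
      have : (Real.sqrt 3 / 2 * (1 - a)) ^ 2 = 3 / 4 * (1 - a) ^ 2 := by
        rw [mul_pow, div_pow, sq, h3sq]; ring
      rw [this]
      nlinarith
    have hsb : Real.sqrt b = Real.sqrt 3 / 2 * (1 - a) := by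
      rw [hb', Real.sqrt_sq (by positivity)]
    have harg : (2 / Real.sqrt 3) * Real.sqrt b = 1 - a := by
      rw [hsb]
      field_simp
    rw [hf, if_pos hble, sq, Real.mul_self_sqrt (by rw [harg]; linarith), harg]
    ring
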